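/- Let A be a Banach algebra with a right unit, and A = B ⊕ I for a closed unital subalgebra B and a closed two-sided ideal I contained in the right annihilators of A (A·I = {0}). If A is ideally amenable, then B is ideally amenable. -/

import Mathlib

open NormedSpace

noncomputable section

variable {A : Type*} [NonUnitalNormedRing A] [NormedSpace ℂ A]
  [IsScalarTower ℂ A A] [SMulCommClass ℂ A A]

/-- A closed two-sided ideal of a Banach algebra, given as a closed submodule
stable under left and right multiplication. -/
structure IsClosedTwoSidedIdeal (I : Submodule ℂ A) : Prop where
  isClosed : IsClosed (I : Set A)
  mul_left : ∀ (a : A) ⦃x : A⦄, x ∈ I → a * x ∈ I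
  mul_right : ∀ (a : A) ⦃x : A⦄, x ∈ I → x * a ∈ I

/-- `D : A → I*` is a derivation for the canonical dual bimodule structure:
`⟨a·f, i⟩ = ⟨f, i a⟩` and `⟨f·a, i⟩ = ⟨f, a i⟩`, so that
`D(ab) = a·D(b) + D(a)·b` reads pointwise as below. -/
def IsIdealDerivation (I : Submodule ℂ A) (hI : IsClosedTwoSidedIdeal I)
    (D : A →L[ℂ] StrongDual ℂ I) : Prop :=
  ∀ a b : A, ∀ i : I, D (a * b) i =
    D b ⟨(i : A) * a, hI.mul_right a i.2⟩ + D a ⟨b * (i : A), hI.mul_left b i.2⟩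

/-- `D : A → I*` is inner: `D = δ_ξ`, i.e. `D a = a·ξ - ξ·a`. -/
def IsInnerIdealDerivation (I : Submodule ℂ A) (hI : IsClosedTwoSidedIdeal I)
    (D : A →L[ℂ] StrongDual ℂ I) : Prop :=
  ∃ ξ : StrongDual ℂ I, ∀ (a : A) (i : I),
    D a i = ξ ⟨(i : A) * a, hI.mul_right a i.2⟩ - ξ ⟨a * (i : A), hI.mul_left a i.2⟩

/-- `A` is ideally amenable: for every closed two-sided ideal `I`,
every continuous derivation `A → I*` is inner. -/
def IdeallyAmenable (A : Type*) [NonUnitalNormedRing A] [NormedSpace ℂ A]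
    [IsScalarTower ℂ A A] [SMulCommClass ℂ A A] : Prop :=
  ∀ (I : Submodule ℂ A) (hI : IsClosedTwoSidedIdeal I) (D : A →L[ℂ] StrongDual ℂ I),
    IsIdealDerivation I hI D → IsInnerIdealDerivation I hI D

/-- Let `A` be a Banach algebra with a right unit,
`A = B ⊕ I` where `B` is a closed unital Banach subalgebra (realized via a
continuous injective algebra embedding `ι : B → A` with closed range) and `I` is a
closed two-sided ideal contained in the right annihilators of `A` (`A·I = {0}`).
If `A` is ideally amenable, then `B` is ideally amenable. -/
theorem ideallyAmenable_of_directSummand [CompleteSpace A]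
    {B : Type*} [NormedRing B] [NormedAlgebra ℂ B] [CompleteSpace B]
    (ι : B →L[ℂ] A)
    (hιmul : ∀ x y : B, ι (x * y) = ι x * ι y)
    (hιinj : Function.Injective ι)
    (hιclosed : IsClosed (Set.range ι))
    (I : Submodule ℂ A) (hI : IsClosedTwoSidedIdeal I)
    (hann : ∀ a : A, ∀ i ∈ I, a * i = 0)
    (hsum : ∀ a : A, ∃ b : B, ∃ i ∈ I, a = ι b + i)
    (hdisj : ∀ (b : B) (i : A), i ∈ I → ι b + i = 0 → b = 0)
    (hrunit : ∃ e : A, ∀ x : A, x * e = x)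
    (hA : IdeallyAmenable A) :
    IdeallyAmenable B := by
  haveI : CompleteSpace ↥I := hI.isClosed.completeSpace_coe
  -- The continuous linear isomorphism `B × I ≃ A`.
  set φ : (B × ↥I) →L[ℂ] A :=
    ι.comp (ContinuousLinearMap.fst ℂ B ↥I) +
      I.subtypeL.comp (ContinuousLinearMap.snd ℂ B ↥I) with hφdef
  have hφapp : ∀ p : B × ↥I, φ p = ι p.1 + (p.2 : A) := fun p => rfl
  have hker : LinearMap.ker (φ : (B × ↥I) →ₗ[ℂ] A) = ⊥ := by
    rw [LinearMap.ker_eq_bot']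
    intro p hp
    have hp' : ι p.1 + (p.2 : A) = 0 := by rw [← hφapp]; exact hp
    have h1 : p.1 = 0 := hdisj p.1 p.2 p.2.2 hp'
    have h2 : (p.2 : A) = 0 := by rw [h1, map_zero, zero_add] at hp'; exact hp'
    exact Prod.ext h1 (Subtype.ext h2)
  have hrange : LinearMap.range (φ : (B × ↥I) →ₗ[ℂ] A) = ⊤ := by
    rw [LinearMap.range_eq_top]
    intro a
    obtain ⟨b, i, hi, hab⟩ := hsum a
    exact ⟨(b, ⟨i, hi⟩), (hφapp _).trans hab.symm⟩
  set ψ : (B × ↥I) ≃L[ℂ] A := ContinuousLinearEquiv.ofBijective φ hker hrange with hψdef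
  have hψφ : ∀ p, ψ p = φ p := fun p => by
    rw [hψdef, ContinuousLinearEquiv.coeFn_ofBijective]
  set π : A →L[ℂ] B :=
    (ContinuousLinearMap.fst ℂ B ↥I).comp (ψ.symm : A →L[ℂ] B × ↥I) with hπdef
  have hπapp : ∀ a : A, π a = (ψ.symm a).1 := fun a => rfl
  have hdec : ∀ a : A, ι (π a) + ((ψ.symm a).2 : A) = a := fun a => by
    rw [hπapp, ← hφapp, ← hψφ, ψ.apply_symm_apply]
  have hπι : ∀ b : B, π (ι b) = b := fun b => by
    have : ψ.symm (ι b) = (b, 0) := by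
      rw [show ι b = ψ (b, 0) by rw [hψφ, hφapp]; simp]
      exact ψ.symm_apply_apply _
    rw [hπapp, this]
  have hπI : ∀ x ∈ I, π x = 0 := fun x hx => by
    apply hdisj (π x) ((((ψ.symm x).2 : A)) - x) (I.sub_mem (ψ.symm x).2.2 hx)
    rw [← add_sub_assoc, hdec, sub_self]
  have hπmul : ∀ a a' : A, π (a * a') = π a * π a' := by
    intro a a'
    have key : a * a' = ι (π a * π a') + ((ψ.symm a).2 : A) * ι (π a') := by
      conv_lhs => rw [← hdec a, ← hdec a']
      rw [hιmul]
      have e1 : ι (π a) * ((ψ.symm a').2 : A) = 0 := hann _ _ (ψ.symm a').2.2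
      have e2 : ((ψ.symm a).2 : A) * ((ψ.symm a').2 : A) = 0 := hann _ _ (ψ.symm a').2.2
      rw [add_mul, mul_add, mul_add, e1, e2, add_zero, add_zero]
    rw [key, map_add, hπι, hπI _ (hI.mul_right (ι (π a')) (ψ.symm a).2.2), add_zero]
  -- Now prove ideal amenability of B.
  intro J hJ D hD
  -- the ideal K = ι(J) + I = π ⁻¹ J of A
  set K : Submodule ℂ A := J.comap (π : A →ₗ[ℂ] B) with hKdef
  have hmemK : ∀ a : A, a ∈ K ↔ π a ∈ J := fun a => Iff.rfl
  have hK : IsClosedTwoSidedIdeal K := by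
    refine ⟨?_, ?_, ?_⟩
    · exact hJ.isClosed.preimage π.continuous
    · intro a x hx
      rw [hmemK, hπmul]
      exact hJ.mul_left _ hx
    · intro a x hx
      rw [hmemK, hπmul]
      exact hJ.mul_right _ hx
  -- the projection τ : K → J
  set τ : ↥K →L[ℂ] ↥J := (π.comp K.subtypeL).codRestrict J (fun k => k.2) with hτdef
  have hτapp : ∀ k : ↥K, ((τ k : B)) = π (k : A) := fun k => rfl
  -- the lifted derivation
  set Dbar : A →L[ℂ] StrongDual ℂ ↥K :=
    (((ContinuousLinearMap.compL ℂ ↥K ↥J ℂ).flip τ).comp D).comp π with hDbardef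
  have hDbarapp : ∀ (a : A) (k : ↥K), Dbar a k = D (π a) (τ k) := fun a k => rfl
  have hDbar : IsIdealDerivation K hK Dbar := by
    intro a b k
    rw [hDbarapp, hDbarapp, hDbarapp, hπmul]
    have e1 : τ ⟨(k : A) * a, hK.mul_right a k.2⟩ =
        ⟨(τ k : B) * π a, hJ.mul_right (π a) (τ k).2⟩ := by
      apply Subtype.ext
      show π ((k : A) * a) = (τ k : B) * π a
      rw [hπmul, hτapp]
    have e2 : τ ⟨b * (k : A), hK.mul_left b k.2⟩ =
        ⟨π b * (τ k : B), hJ.mul_left (π b) (τ k).2⟩ := by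
      apply Subtype.ext
      show π (b * (k : A)) = π b * (τ k : B)
      rw [hπmul, hτapp]
    rw [e1, e2]
    exact hD (π a) (π b) (τ k)
  obtain ⟨ξbar, hξbar⟩ := hA K hK Dbar hDbar
  -- map J into K
  have hσmem : ∀ j : ↥J, ι.comp J.subtypeL j ∈ K := by
    intro j
    rw [hmemK]
    show π (ι (j : B)) ∈ J
    rw [hπι]; exact j.2
  set σ : ↥J →L[ℂ] ↥K := (ι.comp J.subtypeL).codRestrict K hσmem with hσdef
  have hσapp : ∀ j : ↥J, ((σ j : A)) = ι (j : B) := fun j => rfl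
  refine ⟨ξbar.comp σ, ?_⟩
  intro b j
  have h1 : D b j = Dbar (ι b) (σ j) := by
    rw [hDbarapp, hπι]
    have : τ (σ j) = j := by
      apply Subtype.ext
      show π ((σ j : A)) = (j : B)
      rw [hσapp, hπι]
    rw [this]
  have e1 : (⟨(σ j : A) * ι b, hK.mul_right (ι b) (σ j).2⟩ : ↥K) =
      σ ⟨(j : B) * b, hJ.mul_right b j.2⟩ := by
    apply Subtype.ext
    show (σ j : A) * ι b = ((σ ⟨(j : B) * b, hJ.mul_right b j.2⟩ : ↥K) : A)
    rw [hσapp, hσapp, hιmul]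
  have e2 : (⟨ι b * (σ j : A), hK.mul_left (ι b) (σ j).2⟩ : ↥K) =
      σ ⟨b * (j : B), hJ.mul_left b j.2⟩ := by
    apply Subtype.ext
    show ι b * (σ j : A) = ((σ ⟨b * (j : B), hJ.mul_left b j.2⟩ : ↥K) : A)
    rw [hσapp, hσapp, hιmul]
  rw [h1, hξbar (ι b) (σ j), e1, e2]
  rfl
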